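/- Let $\Omega\subset\mathbb{R}^N$ ($N\ge 2$) be a bounded convex open nonempty set. For every $t\ge 0$, the interior parallel set $\Omega(t)=\{x\in\Omega: d_\Omega(x)>t\}$ is convex, and its perimeter satisfies $P(\Omega(t))\ge P(\Omega)\left(1-\frac{t}{r_\Omega}\right)_+^{N-1}$, where $(s)_+ = \max(s,0)$. -/

import Mathlib

open Real MeasureTheory Metric

/-- Distance from `x` to the boundary of `Ω`. -/
noncomputable def distBdry {N : ℕ} (Ω : Set (EuclideanSpace ℝ (Fin N)))
    (x : EuclideanSpace ℝ (Fin N)) : ℝ :=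
  Metric.infDist x (frontier Ω)

/-- Inradius of `Ω`: the supremum over `Ω` of the distance to the boundary. -/
noncomputable def inradius {N : ℕ} (Ω : Set (EuclideanSpace ℝ (Fin N))) : ℝ :=
  ⨆ x ∈ Ω, distBdry Ω x

/-- Perimeter of a convex body: the `(N-1)`-dimensional Hausdorff measure of its boundary. -/
noncomputable def perim {N : ℕ} (Ω : Set (EuclideanSpace ℝ (Fin N))) : ℝ :=
  (μH[(N : ℝ) - 1] (frontier Ω)).toReal

open scoped RealInnerProductSpace Pointwise ENNReal NNReal

section Aux

variable {F : Type*} [NormedAddCommGroup F] [InnerProductSpace ℝ F]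

/-- Metric projection onto a closed convex set: existence plus variational inequality. -/
lemma proj_spec [CompleteSpace F] {K : Set F} (hK : Convex ℝ K) (hcl : IsClosed K)
    (hne : K.Nonempty) (u : F) :
    ∃ v ∈ K, ∀ w ∈ K, ⟪u - v, w - v⟫ ≤ 0 := by
  obtain ⟨v, hv, hmin⟩ := exists_norm_eq_iInf_of_complete_convex hne hcl.isComplete hK u
  exact ⟨v, hv, (norm_eq_iInf_iff_real_inner_le_zero hK hv).1 hmin⟩

/-- Monotonicity of the Hausdorff measure of frontiers of nested convex sets. -/
lemma hausdorff_frontier_mono [CompleteSpace F] [MeasurableSpace F] [BorelSpace F]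
    {K L : Set F} (hK : Convex ℝ K) (hKo : IsOpen K) (hKne : K.Nonempty)
    (hL : Convex ℝ L) (hLb : Bornology.IsBounded L) (hKL : K ⊆ closure L)
    {d : ℝ} (hd : 0 ≤ d) :
    μH[d] (frontier K) ≤ μH[d] (frontier L) := by
  have hKcConv : Convex ℝ (closure K) := hK.closure
  have hKcNe : (closure K).Nonempty := hKne.mono subset_closure
  choose P hPmem hPvar using fun u => proj_spec hKcConv isClosed_closure hKcNe u
  -- P is 1-Lipschitz
  have lip : LipschitzWith 1 P := by
    apply LipschitzWith.of_dist_le_mul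
    intro a b
    simp only [NNReal.coe_one, one_mul, dist_eq_norm]
    set p := P a with hp
    set q := P b with hq
    have h1 : ⟪a - p, q - p⟫ ≤ 0 := hPvar a q (hPmem b)
    have h2 : ⟪b - q, p - q⟫ ≤ 0 := hPvar b p (hPmem a)
    have h1' : 0 ≤ ⟪a - p, p - q⟫ := by
      have : p - q = -(q - p) := by abel
      rw [this, inner_neg_right]; linarith
    have e : ⟪a - b, p - q⟫ - ⟪p - q, p - q⟫ = ⟪a - p, p - q⟫ - ⟪b - q, p - q⟫ := by
      rw [← inner_sub_left, ← inner_sub_left]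
      congr 1
      abel
    have hsq : ⟪p - q, p - q⟫ = ‖p - q‖ ^ 2 := real_inner_self_eq_norm_sq _
    have key : ‖p - q‖ ^ 2 ≤ ⟪a - b, p - q⟫ := by linarith
    have hCS : ⟪a - b, p - q⟫ ≤ ‖a - b‖ * ‖p - q‖ := real_inner_le_norm _ _
    rcases (norm_nonneg (p - q)).eq_or_lt with h0 | h0
    · rw [← h0]; exact norm_nonneg _
    · nlinarith
  -- P maps frontier L onto frontier K
  have surj : frontier K ⊆ P '' frontier L := by
    intro z hz
    have hzK : z ∈ closure K := frontier_subset_closure hz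
    have hzNotK : z ∉ K := by
      rw [hKo.frontier_eq] at hz
      exact hz.2
    obtain ⟨f, hf⟩ := geometric_hahn_banach_open_point hK hKo hzNotK
    set ν : F := (InnerProductSpace.toDual ℝ F).symm f with hνdef
    have hν : ∀ x, ⟪ν, x⟫ = f x := fun x => InnerProductSpace.toDual_symm_apply
    have hle : ∀ k ∈ closure K, f k ≤ f z := by
      intro k hk
      have : closure K ⊆ {x | f x ≤ f z} :=
        closure_minimal (fun a ha => (hf a ha).le) (isClosed_le f.continuous continuous_const)
      exact this hk
    have hsupp : ∀ k ∈ closure K, ⟪ν, k - z⟫ ≤ 0 := by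
      intro k hk
      rw [inner_sub_right, hν, hν]
      linarith [hle k hk]
    have hν0 : ν ≠ 0 := by
      obtain ⟨a, ha⟩ := hKne
      intro h0
      have h1 : f a < f z := hf a ha
      have h2 : f a = 0 := by rw [← hν, h0, inner_zero_left]
      have h3 : f z = 0 := by rw [← hν, h0, inner_zero_left]
      rw [h2, h3] at h1; exact lt_irrefl _ h1
    have hνn : 0 < ‖ν‖ := norm_pos_iff.2 hν0
    -- the ray z + s • ν
    set S : Set ℝ := {s : ℝ | 0 ≤ s ∧ z + s • ν ∈ closure L} with hSdef
    have hzL : z ∈ closure L := by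
      have : closure K ⊆ closure L := closure_minimal hKL isClosed_closure
      exact this hzK
    have hS0 : (0 : ℝ) ∈ S := ⟨le_refl _, by simpa using hzL⟩
    obtain ⟨R, hR⟩ := hLb.closure.subset_closedBall 0
    have hSbdd : BddAbove S := by
      refine ⟨(R + ‖z‖) / ‖ν‖, ?_⟩
      rintro s ⟨hs0, hsm⟩
      have h1 : ‖z + s • ν‖ ≤ R := mem_closedBall_zero_iff.1 (hR hsm)
      have h2 : ‖s • ν‖ ≤ R + ‖z‖ := by
        have : s • ν = (z + s • ν) - z := by abel
        rw [this]
        calc ‖(z + s • ν) - z‖ ≤ ‖z + s • ν‖ + ‖z‖ := norm_sub_le _ _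
          _ ≤ R + ‖z‖ := by linarith
      have h3 : ‖s • ν‖ = s * ‖ν‖ := by
        rw [norm_smul, Real.norm_of_nonneg hs0]
      rw [le_div_iff₀ hνn]
      linarith
    have hSclosed : IsClosed S := by
      have : S = Set.Ici (0 : ℝ) ∩ (fun s : ℝ => z + s • ν) ⁻¹' closure L := by
        ext s; simp [hSdef, Set.mem_Ici]
      rw [this]
      exact isClosed_Ici.inter (isClosed_closure.preimage (by continuity))
    set s₀ := sSup S with hs₀def
    have hs₀mem : s₀ ∈ S := hSclosed.csSup_mem ⟨0, hS0⟩ hSbdd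
    set w := z + s₀ • ν with hwdef
    have hwL : w ∈ closure L := hs₀mem.2
    have hnot : ∀ ε > (0 : ℝ), z + (s₀ + ε) • ν ∉ closure L := by
      intro ε hε h
      have : s₀ + ε ∈ S := ⟨by linarith [hs₀mem.1], h⟩
      have := le_csSup hSbdd this
      linarith
    have hwLc : w ∈ closure (Lᶜ) := by
      have htend : Filter.Tendsto (fun n : ℕ => z + (s₀ + 1 / (n + 1)) • ν)
          Filter.atTop (nhds w) := by
        have h1 : Filter.Tendsto (fun n : ℕ => s₀ + 1 / (n + 1)) Filter.atTop (nhds s₀) := by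
          have : Filter.Tendsto (fun n : ℕ => 1 / ((n : ℝ) + 1)) Filter.atTop (nhds 0) :=
            tendsto_one_div_add_atTop_nhds_zero_nat
          have := (tendsto_const_nhds : Filter.Tendsto (fun _ : ℕ => s₀) Filter.atTop
            (nhds s₀)).add this
          simpa using this
        have := (h1.smul_const ν).const_add z
        simpa using this
      refine mem_closure_of_tendsto htend (Filter.Eventually.of_forall fun n => ?_)
      intro hmem
      exact hnot (1 / (n + 1)) (by positivity) (subset_closure hmem)
    have hwF : w ∈ frontier L := by
      rw [frontier_eq_closure_inter_closure]
      exact ⟨hwL, hwLc⟩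
    -- P w = z
    refine ⟨w, hwF, ?_⟩
    set z' := P w with hz'def
    have hz'K : z' ∈ closure K := hPmem w
    have h1 : ⟪w - z', z - z'⟫ ≤ 0 := hPvar w z hzK
    have h2 : ⟪w - z, z' - z⟫ ≤ 0 := by
      have hwz : w - z = s₀ • ν := by rw [hwdef]; abel
      rw [hwz, real_inner_smul_left]
      exact mul_nonpos_of_nonneg_of_nonpos hs₀mem.1 (hsupp z' hz'K)
    have e : ⟪z' - z, z' - z⟫ = ⟪w - z, z' - z⟫ - ⟪w - z', z' - z⟫ := by
      rw [← inner_sub_left]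
      congr 1
      abel
    have h1' : 0 ≤ ⟪w - z', z' - z⟫ := by
      have : z' - z = -(z - z') := by abel
      rw [this, inner_neg_right]; linarith
    have hle0 : ⟪z' - z, z' - z⟫ ≤ 0 := by linarith
    exact sub_eq_zero.1 (real_inner_self_nonpos.1 hle0)
  calc μH[d] (frontier K) ≤ μH[d] (P '' frontier L) := measure_mono surj
    _ ≤ (1 : ℝ≥0) ^ d * μH[d] (frontier L) := lip.hausdorffMeasure_image_le hd _
    _ = μH[d] (frontier L) := by simp

end Aux


section Geom

variable {N : ℕ} {Ω : Set (EuclideanSpace ℝ (Fin N))}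

lemma ball_subset_omega (hopen : IsOpen Ω) {x : EuclideanSpace ℝ (Fin N)} (hx : x ∈ Ω) :
    ball x (distBdry Ω x) ⊆ Ω := by
  rcases le_or_gt (distBdry Ω x) 0 with h | h
  · rw [ball_eq_empty.2 h]; exact Set.empty_subset _
  · apply IsPreconnected.subset_left_of_subset_union hopen isClosed_closure.isOpen_compl
      (disjoint_compl_right.mono_left subset_closure) ?_ ⟨x, mem_ball_self h, hx⟩
      (convex_ball x _).isPreconnected
    intro y hy
    by_cases hc : y ∈ closure Ω
    · left
      rcases (closure_eq_self_union_frontier Ω ▸ hc) with h' | h'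
      · exact h'
      · exact absurd h' (Set.disjoint_left.1 Metric.disjoint_ball_infDist hy)
    · right; exact hc

lemma le_distBdry (hopen : IsOpen Ω) (hfr : (frontier Ω).Nonempty)
    {z : EuclideanSpace ℝ (Fin N)} {s : ℝ} (hb : ball z s ⊆ Ω) : s ≤ distBdry Ω z := by
  by_contra h
  push_neg at h
  obtain ⟨y, hy, hdy⟩ := (Metric.infDist_lt_iff hfr).1 h
  have hyb : y ∈ ball z s := by rwa [mem_ball']
  have hyΩ : y ∈ Ω := hb hyb
  rw [hopen.frontier_eq] at hy
  exact hy.2 hyΩ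

lemma distBdry_pos (hopen : IsOpen Ω) (hfr : (frontier Ω).Nonempty)
    {x : EuclideanSpace ℝ (Fin N)} (hx : x ∈ Ω) : 0 < distBdry Ω x := by
  obtain ⟨ε, hε, hball⟩ := Metric.isOpen_iff.1 hopen x hx
  linarith [le_distBdry hopen hfr hball]

lemma distBdry_combo (hconv : Convex ℝ Ω) (hopen : IsOpen Ω) (hfr : (frontier Ω).Nonempty)
    {x y : EuclideanSpace ℝ (Fin N)} (hx : x ∈ Ω) (hy : y ∈ Ω) {a b : ℝ}
    (ha : 0 ≤ a) (hb : 0 ≤ b) (hab : a + b = 1) :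
    a * distBdry Ω x + b * distBdry Ω y ≤ distBdry Ω (a • x + b • y) := by
  rcases eq_or_lt_of_le ha with h0 | hpa
  · have hb1 : b = 1 := by linarith
    subst hb1; rw [← h0]; simp
  rcases eq_or_lt_of_le hb with h0 | hpb
  · have ha1 : a = 1 := by linarith
    subst ha1; rw [← h0]; simp
  have hdx : 0 < distBdry Ω x := distBdry_pos hopen hfr hx
  have hdy : 0 < distBdry Ω y := distBdry_pos hopen hfr hy
  set dx := distBdry Ω x with hdxd
  set dy := distBdry Ω y with hdyd
  set c := a * dx + b * dy with hc
  have hcpos : 0 < c := by nlinarith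
  apply le_distBdry hopen hfr
  intro w hw
  set v := w - (a • x + b • y) with hv
  have hvn : ‖v‖ < c := by
    rw [hv, ← dist_eq_norm]
    exact mem_ball.1 hw
  have hs : a * (dx / c) + b * (dy / c) = 1 := by field_simp; linarith
  have hx1 : x + (dx / c) • v ∈ Ω := by
    apply ball_subset_omega hopen hx
    rw [mem_ball, dist_eq_norm]
    have he : x + (dx / c) • v - x = (dx / c) • v := by abel
    rw [he, norm_smul, Real.norm_of_nonneg (by positivity)]
    calc dx / c * ‖v‖ < dx / c * c := by
          apply mul_lt_mul_of_pos_left hvn (by positivity)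
      _ = dx := div_mul_cancel₀ _ hcpos.ne'
  have hy1 : y + (dy / c) • v ∈ Ω := by
    apply ball_subset_omega hopen hy
    rw [mem_ball, dist_eq_norm]
    have he : y + (dy / c) • v - y = (dy / c) • v := by abel
    rw [he, norm_smul, Real.norm_of_nonneg (by positivity)]
    calc dy / c * ‖v‖ < dy / c * c := by
          apply mul_lt_mul_of_pos_left hvn (by positivity)
      _ = dy := div_mul_cancel₀ _ hcpos.ne'
  have hw_eq : w = a • (x + (dx / c) • v) + b • (y + (dy / c) • v) := by
    have h1 : a • (x + (dx / c) • v) + b • (y + (dy / c) • v)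
        = (a • x + b • y) + (a * (dx / c) + b * (dy / c)) • v := by module
    rw [h1, hs, one_smul, hv]; abel
  rw [hw_eq]
  exact hconv hx1 hy1 hpa.le hpb.le hab

lemma frontier_nonempty_of_bounded (hN : 1 ≤ N) (hbdd : Bornology.IsBounded Ω)
    (hne : Ω.Nonempty) : (frontier Ω).Nonempty := by
  haveI : Nonempty (Fin N) := ⟨⟨0, hN⟩⟩
  rw [nonempty_frontier_iff]
  refine ⟨hne, ?_⟩
  intro h
  obtain ⟨R, hR⟩ := hbdd.subset_closedBall 0
  set v : EuclideanSpace ℝ (Fin N) := EuclideanSpace.single ⟨0, hN⟩ 1 with hvd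
  have hv : ‖v‖ = 1 := by simp [hvd]
  set x := (|R| + 1) • v with hxd
  have hx : ‖x‖ = |R| + 1 := by
    rw [hxd, norm_smul, hv, Real.norm_of_nonneg (by positivity), mul_one]
  have hmem : x ∈ Ω := h ▸ Set.mem_univ x
  have hle := mem_closedBall_zero_iff.1 (hR hmem)
  rw [hx] at hle
  linarith [le_abs_self R]

lemma inradius_attained (hopen : IsOpen Ω) (hbdd : Bornology.IsBounded Ω)
    (hne : Ω.Nonempty) (hfr : (frontier Ω).Nonempty) :
    ∃ x₀ ∈ Ω, distBdry Ω x₀ = inradius Ω ∧ ∀ x ∈ Ω, distBdry Ω x ≤ inradius Ω := by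
  have hcont : Continuous (distBdry Ω) := continuous_infDist_pt _
  have hcpt : IsCompact (closure Ω) := hbdd.isCompact_closure
  obtain ⟨xM, hxMcl, hmax⟩ := hcpt.exists_isMaxOn (hne.mono subset_closure) hcont.continuousOn
  obtain ⟨x1, hx1⟩ := hne
  have hpos : 0 < distBdry Ω x1 := distBdry_pos hopen hfr hx1
  have hxMΩ : xM ∈ Ω := by
    by_contra h
    have hfrm : xM ∈ frontier Ω := by rw [hopen.frontier_eq]; exact ⟨hxMcl, h⟩
    have h0 : distBdry Ω xM = 0 := Metric.infDist_zero_of_mem hfrm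
    have hcon : distBdry Ω x1 ≤ distBdry Ω xM := hmax (subset_closure hx1)
    rw [h0] at hcon
    simp only [distBdry] at hcon hpos
    linarith
  have hble : ∀ x, (⨆ _ : x ∈ Ω, distBdry Ω x) ≤ distBdry Ω xM := by
    intro x
    by_cases hx : x ∈ Ω
    · haveI : Nonempty (x ∈ Ω) := ⟨hx⟩
      rw [ciSup_const]
      exact hmax (subset_closure hx)

    · haveI : IsEmpty (x ∈ Ω) := ⟨hx⟩
      rw [Real.iSup_of_isEmpty]
      exact Metric.infDist_nonneg
  have h1 : inradius Ω ≤ distBdry Ω xM := ciSup_le hble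
  have h2 : distBdry Ω xM ≤ inradius Ω := by
    have hbdd' : BddAbove (Set.range fun x => ⨆ _ : x ∈ Ω, distBdry Ω x) := by
      refine ⟨distBdry Ω xM, ?_⟩
      rintro _ ⟨x, rfl⟩
      exact hble x
    haveI : Nonempty (xM ∈ Ω) := ⟨hxMΩ⟩
    calc distBdry Ω xM = ⨆ _ : xM ∈ Ω, distBdry Ω xM := ciSup_const.symm
      _ ≤ inradius Ω := le_ciSup hbdd' xM
  exact ⟨xM, hxMΩ, le_antisymm h2 h1, fun x hx => (show distBdry Ω x ≤ distBdry Ω xM from hmax (subset_closure hx)).trans h2⟩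

end Geom

theorem stmt_17 (N : ℕ) (hN : 2 ≤ N) (Ω : Set (EuclideanSpace ℝ (Fin N)))
    (hconv : Convex ℝ Ω) (hopen : IsOpen Ω) (hbdd : Bornology.IsBounded Ω)
    (hne : Ω.Nonempty) (t : ℝ) (ht : 0 ≤ t) :
    Convex ℝ {x ∈ Ω | t < distBdry Ω x} ∧
      perim Ω * max (1 - t / inradius Ω) 0 ^ (N - 1) ≤
        perim {x ∈ Ω | t < distBdry Ω x} := by
  have hfr : (frontier Ω).Nonempty := frontier_nonempty_of_bounded (by omega) hbdd hne
  set S := {x ∈ Ω | t < distBdry Ω x} with hSdef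
  have hconvS : Convex ℝ S := by
    intro x hx y hy a b ha hb hab
    refine ⟨hconv hx.1 hy.1 ha hb hab, ?_⟩
    have hcompo := distBdry_combo hconv hopen hfr hx.1 hy.1 ha hb hab
    by_cases hpa : 0 < a
    · have h1 : a * t < a * distBdry Ω x := mul_lt_mul_of_pos_left hx.2 hpa
      have h2 : b * t ≤ b * distBdry Ω y := mul_le_mul_of_nonneg_left hy.2.le hb
      nlinarith
    · have ha0 : a = 0 := le_antisymm (not_lt.1 hpa) ha
      have hb1 : b = 1 := by linarith
      subst ha0; subst hb1
      simpa using hy.2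
  refine ⟨hconvS, ?_⟩
  obtain ⟨x₀, hx₀Ω, hx₀r, hub⟩ := inradius_attained hopen hbdd hne hfr
  set r := inradius Ω with hrdef
  have hrpos : 0 < r := hx₀r ▸ distBdry_pos hopen hfr hx₀Ω
  have hd : (0 : ℝ) ≤ (N : ℝ) - 1 := by
    have h2 : (2 : ℝ) ≤ (N : ℝ) := by exact_mod_cast hN
    linarith
  by_cases htr : t < r
  · -- main case
    set l := 1 - t / r with hldef
    have hl0 : 0 < l := by
      have hlt : t / r < 1 := (div_lt_one hrpos).2 htr
      rw [hldef]; linarith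
    have hmaxl : max (1 - t / r) 0 = l := max_eq_left hl0.le
    rw [hmaxl]
    have h1l : 0 ≤ 1 - l := by
      have : 0 ≤ t / r := div_nonneg ht hrpos.le
      rw [hldef]; linarith
    set c := x₀ - l • x₀ with hcdef
    set Ωl := (fun y => y + c) '' (l • Ω) with hΩldef
    have hsub : Ωl ⊆ S := by
      rintro w ⟨q, hq, rfl⟩
      rw [Set.mem_smul_set] at hq
      obtain ⟨p, hp, rfl⟩ := hq
      have heq : l • p + c = l • p + (1 - l) • x₀ := by
        rw [hcdef]; module
      have hmem : l • p + (1 - l) • x₀ ∈ Ω := hconv hp hx₀Ω hl0.le h1l (by ring)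
      have hcompo := distBdry_combo hconv hopen hfr hp hx₀Ω hl0.le h1l (by ring)
      have hdp : 0 < distBdry Ω p := distBdry_pos hopen hfr hp
      have ht_eq : (1 - l) * r = t := by
        rw [hldef]
        field_simp; ring
      show l • p + c ∈ S
      rw [heq]
      refine ⟨hmem, ?_⟩
      nlinarith [hcompo, hx₀r, mul_pos hl0 hdp]
    have hΩlopen : IsOpen Ωl := by
      have h1 : IsOpen (l • Ω) := hopen.smul₀ hl0.ne'
      exact (Homeomorph.addRight c).isOpenMap (l • Ω) h1
    have hΩlconv : Convex ℝ Ωl := by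
      have heq : Ωl = (fun y => c + y) '' (l • Ω) := by
        rw [hΩldef]
        simp only [add_comm]
      rw [heq]
      exact (hconv.smul l).translate c
    have hΩlne : Ωl.Nonempty := by
      obtain ⟨p, hp⟩ := hne
      exact ⟨l • p + c, ⟨l • p, Set.smul_mem_smul_set hp, rfl⟩⟩
    have hSopen : IsOpen S := by
      have heq : S = Ω ∩ {x | t < distBdry Ω x} := rfl
      rw [heq]
      exact hopen.inter (isOpen_lt continuous_const (continuous_infDist_pt _))
    have hSb : Bornology.IsBounded S := hbdd.subset (Set.sep_subset _ _)
    have hSne : S.Nonempty := ⟨x₀, hx₀Ω, by rw [hx₀r]; exact htr⟩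
    have m1 := hausdorff_frontier_mono hΩlconv hΩlopen hΩlne hconvS hSb
      (hsub.trans subset_closure) hd
    have m2 := hausdorff_frontier_mono hconvS hSopen hSne hconv hbdd
      ((Set.sep_subset _ _).trans subset_closure) hd
    have scal : μH[(N : ℝ) - 1] (frontier Ωl)
        = (‖l‖₊ ^ ((N : ℝ) - 1) : ℝ≥0) • μH[(N : ℝ) - 1] (frontier Ω) := by
      have hfr1 : frontier Ωl = (fun y => y + c) '' frontier (l • Ω) := by
        rw [hΩldef]
        have h := (Homeomorph.addRight c).image_frontier (l • Ω)
        simpa using h.symm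
      have hfr2 : frontier (l • Ω) = l • frontier Ω := by
        have h := (Homeomorph.smulOfNeZero l hl0.ne').image_frontier Ω
        simpa [Set.image_smul] using h.symm
      have hiso : Isometry (fun y : EuclideanSpace ℝ (Fin N) => y + c) :=
        Isometry.of_dist_eq fun a b => dist_add_right a b c
      rw [hfr1, hiso.hausdorffMeasure_image (Or.inl hd), hfr2,
        Measure.hausdorffMeasure_smul₀ hd hl0.ne']
    simp only [perim]
    by_cases hA : μH[(N : ℝ) - 1] (frontier Ω) = ⊤
    · rw [hA]
      simp only [ENNReal.toReal_top, zero_mul]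
      exact ENNReal.toReal_nonneg
    · have hB : μH[(N : ℝ) - 1] (frontier S) ≠ ⊤ := fun h => hA (top_le_iff.1 (h ▸ m2))
      have hCB : ((‖l‖₊ ^ ((N : ℝ) - 1) : ℝ≥0) • μH[(N : ℝ) - 1] (frontier Ω)).toReal
          ≤ (μH[(N : ℝ) - 1] (frontier S)).toReal := by
        apply ENNReal.toReal_mono hB
        rw [← scal]
        exact m1
      have hcoe : ((‖l‖₊ ^ ((N : ℝ) - 1) : ℝ≥0) : ℝ) = l ^ (N - 1) := by
        rw [NNReal.coe_rpow, coe_nnnorm, Real.norm_of_nonneg hl0.le]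
        have hcast : (N : ℝ) - 1 = ((N - 1 : ℕ) : ℝ) := by
          rw [Nat.cast_sub (by omega)]
          norm_num
        rw [hcast, Real.rpow_natCast]
      have hsmul : ((‖l‖₊ ^ ((N : ℝ) - 1) : ℝ≥0) • μH[(N : ℝ) - 1] (frontier Ω)).toReal
          = l ^ (N - 1) * (μH[(N : ℝ) - 1] (frontier Ω)).toReal := by
        rw [ENNReal.smul_def, smul_eq_mul, ENNReal.toReal_mul, ENNReal.coe_toReal, hcoe]
      calc (μH[(N : ℝ) - 1] (frontier Ω)).toReal * l ^ (N - 1)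
          = l ^ (N - 1) * (μH[(N : ℝ) - 1] (frontier Ω)).toReal := mul_comm _ _
        _ = ((‖l‖₊ ^ ((N : ℝ) - 1) : ℝ≥0) • μH[(N : ℝ) - 1] (frontier Ω)).toReal := hsmul.symm
        _ ≤ (μH[(N : ℝ) - 1] (frontier S)).toReal := hCB
  · -- degenerate case t ≥ r
    push_neg at htr
    have hmax0 : max (1 - t / r) 0 = 0 := by
      apply max_eq_right
      have h1 : 1 ≤ t / r := (le_div_iff₀ hrpos).2 (by linarith)
      linarith
    rw [hmax0]
    have hNe : N - 1 ≠ 0 := by omega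
    rw [zero_pow hNe, mul_zero]
    exact ENNReal.toReal_nonneg
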